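/- There exist constants C > 0 and p₀ ∈ (0,1) such that for every p ∈ (0, p₀], setting q = 1 − p, the quantity −log (q;q)_∞ satisfies | −log (q;q)_∞ − π²/(6p) | ≤ C·(1 + log(1/p)). -/

import Mathlib

noncomputable section

open Real Finset

namespace QPochAux

/-- Basel problem shifted by one. -/
lemma hasSum_basel_succ : HasSum (fun n : ℕ => 1 / ((n : ℝ) + 1) ^ 2) (π ^ 2 / 6) := by
  have h := (hasSum_nat_add_iff' (f := fun n : ℕ => (1 : ℝ) / (n : ℝ) ^ 2) 1).mpr hasSum_zeta_two
  simp only [Finset.range_one, Finset.sum_singleton, Nat.cast_zero] at h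
  norm_num at h
  convert h using 2 with n
  push_cast
  rfl
  ring

lemma low_bound {p : ℝ} (hp0 : 0 < p) (hp1 : p < 1) (k : ℕ) :
    ((k : ℝ) + 1) * p * (1 - p) ^ (k + 1) ≤ 1 - (1 - p) ^ (k + 1) := by
  have hq0 : (0:ℝ) ≤ 1 - p := by linarith
  have hq1 : (1:ℝ) - p ≤ 1 := by linarith
  have hgeom := geom_sum_mul (1 - p) (k + 1)
  have h1 : 1 - (1 - p) ^ (k + 1) = p * ∑ i ∈ Finset.range (k + 1), (1 - p) ^ i := by
    linear_combination hgeom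
  have hsum : ((k : ℝ) + 1) * (1 - p) ^ (k + 1) ≤ ∑ i ∈ Finset.range (k + 1), (1 - p) ^ i := by
    calc ((k : ℝ) + 1) * (1 - p) ^ (k + 1)
        = ∑ _i ∈ Finset.range (k + 1), (1 - p) ^ (k + 1) := by
          rw [Finset.sum_const, Finset.card_range]; push_cast; ring
      _ ≤ ∑ i ∈ Finset.range (k + 1), (1 - p) ^ i :=
          Finset.sum_le_sum fun i hi =>
            pow_le_pow_of_le_one hq0 hq1 (Finset.mem_range.mp hi).le
  calc ((k : ℝ) + 1) * p * (1 - p) ^ (k + 1)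
      = p * (((k : ℝ) + 1) * (1 - p) ^ (k + 1)) := by ring
    _ ≤ p * ∑ i ∈ Finset.range (k + 1), (1 - p) ^ i :=
        mul_le_mul_of_nonneg_left hsum hp0.le
    _ = 1 - (1 - p) ^ (k + 1) := h1.symm

lemma up_bound {p : ℝ} (hp1 : p < 1) (k : ℕ) :
    1 - (1 - p) ^ (k + 1) ≤ ((k : ℝ) + 1) * p := by
  have h := one_add_mul_le_pow (a := -p) (by linarith) (k + 1)
  have h2 : ((1 : ℝ) + -p) = 1 - p := by ring
  rw [h2] at h
  push_cast at h
  linarith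

/-- The key termwise estimate. -/
lemma term_bound {p : ℝ} (hp0 : 0 < p) (hp1 : p < 1) (k : ℕ) :
    |(1 - p) ^ (k + 1) / (((k : ℝ) + 1) * (1 - (1 - p) ^ (k + 1))) - 1 / (((k : ℝ) + 1) ^ 2 * p)|
      ≤ min (1 / ((k : ℝ) + 1)) (1 / (((k : ℝ) + 1) ^ 2 * p)) := by
  set m : ℝ := (k : ℝ) + 1 with hm
  have hm1 : (1 : ℝ) ≤ m := by simp [hm]
  have hm0 : (0 : ℝ) < m := by linarith
  set Q : ℝ := (1 - p) ^ (k + 1) with hQdef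
  have hQ0 : 0 ≤ Q := pow_nonneg (by linarith) _
  have hQ1 : Q < 1 := pow_lt_one₀ (by linarith) (by linarith) (Nat.succ_ne_zero k)
  have hD0 : 0 < 1 - Q := by linarith
  have hlow : m * p * Q ≤ 1 - Q := low_bound hp0 hp1 k
  have hup : 1 - Q ≤ m * p := up_bound hp1 k
  have hA : Q / (m * (1 - Q)) ≤ 1 / (m ^ 2 * p) := by
    rw [div_le_div_iff₀ (by positivity) (by positivity)]
    nlinarith [mul_le_mul_of_nonneg_left hlow hm0.le]
  have key : 1 / (m ^ 2 * p) - Q / (m * (1 - Q))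
      = ((1 - Q) - m * p * Q) / (m ^ 2 * p * (1 - Q)) := by
    field_simp
  rw [abs_sub_comm, abs_of_nonneg (by linarith), key, le_min_iff]
  constructor
  · rw [div_le_div_iff₀ (by positivity) hm0]
    have h3 : (1 - Q) - m * p * Q ≤ m * p * (1 - Q) := by nlinarith [hup]
    nlinarith [mul_le_mul_of_nonneg_right h3 hm0.le]
  · rw [div_le_div_iff₀ (by positivity) (by positivity)]
    have h4 : (1 - Q) - m * p * Q ≤ 1 - Q := by nlinarith [mul_nonneg (mul_nonneg hm0.le hp0.le) hQ0]
    nlinarith [mul_le_mul_of_nonneg_right h4 (by positivity : (0:ℝ) ≤ m ^ 2 * p)]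

/-- Bound on the sum of the minima. -/
lemma sum_min_le {p : ℝ} (hp0 : 0 < p) (hp2 : p ≤ 1 / 2) :
    ∑' k : ℕ, min (1 / ((k : ℝ) + 1)) (1 / (((k : ℝ) + 1) ^ 2 * p))
      ≤ 3 * (1 + Real.log (1 / p)) := by
  set M : ℕ → ℝ := fun k => min (1 / ((k : ℝ) + 1)) (1 / (((k : ℝ) + 1) ^ 2 * p)) with hM
  have hinvp1 : (1 : ℝ) ≤ 1 / p := by
    rw [le_div_iff₀ hp0]; linarith
  have hinvp2 : (2 : ℝ) ≤ 1 / p := by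
    rw [le_div_iff₀ hp0]; linarith
  set N : ℕ := ⌈1 / p⌉₊ with hN
  have hN0 : 0 < N := Nat.ceil_pos.mpr (by positivity)
  have hNR0 : (0 : ℝ) < N := by exact_mod_cast hN0
  have hNp : 1 / p ≤ (N : ℝ) := Nat.le_ceil _
  have hNle : (N : ℝ) ≤ 2 * (1 / p) := by
    have h := Nat.ceil_lt_add_one (by positivity : (0:ℝ) ≤ 1 / p)
    have : (N : ℝ) < 1 / p + 1 := h
    linarith
  have hb_sum : Summable (fun k : ℕ => 1 / (((k : ℝ) + 1) ^ 2 * p)) := by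
    have := (hasSum_basel_succ.div_const p).summable
    refine this.congr fun k => ?_
    rw [div_div]
  have hMnn : ∀ k, 0 ≤ M k := fun k => le_min (by positivity) (by positivity)
  have hMle : ∀ k, M k ≤ 1 / (((k : ℝ) + 1) ^ 2 * p) := fun k => min_le_right _ _
  have hMs : Summable M := Summable.of_nonneg_of_le hMnn hMle hb_sum
  have hsplit := (Summable.sum_add_tsum_nat_add N hMs).symm
  -- head estimate
  have hhead : ∑ i ∈ Finset.range N, M i ≤ 1 + Real.log N := by
    have h1 : ∑ i ∈ Finset.range N, M i ≤ ∑ i ∈ Finset.range N, 1 / ((i : ℝ) + 1) :=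
      Finset.sum_le_sum fun i _ => min_le_left _ _
    have h2 : ∑ i ∈ Finset.range N, 1 / ((i : ℝ) + 1) = ((harmonic N : ℚ) : ℝ) := by
      rw [harmonic]
      push_cast
      simp [one_div]
    calc ∑ i ∈ Finset.range N, M i ≤ ((harmonic N : ℚ) : ℝ) := by rw [← h2]; exact h1
      _ ≤ 1 + Real.log N := harmonic_le_one_add_log N
  -- tail estimate
  have hbase : Summable (fun n : ℕ => (((n : ℝ) + N + 1) ^ 2)⁻¹) := by
    have h0 : Summable (fun n : ℕ => (((n : ℝ) + 1) ^ 2)⁻¹) := by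
      refine hasSum_basel_succ.summable.congr fun n => ?_
      rw [one_div]
    have := (summable_nat_add_iff (f := fun n : ℕ => (((n : ℝ) + 1) ^ 2)⁻¹) N).mpr h0
    refine this.congr fun n => ?_
    push_cast
    ring_nf
  have htail0 : ∑' i : ℕ, (((i : ℝ) + N + 1) ^ 2)⁻¹ ≤ (N : ℝ)⁻¹ := by
    apply Real.tsum_le_of_sum_range_le (fun n => by positivity)
    intro n
    have h := sum_Ioc_inv_sq_le_sub (α := ℝ) (k := N) (n := N + n) hN0.ne' (Nat.le_add_right N n)
    rw [← Finset.Icc_add_one_left_eq_Ioc, ← Finset.Ico_add_one_right_eq_Icc, Finset.sum_Ico_eq_sum_range] at h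
    have hcount : N + n + 1 - (N + 1) = n := by omega
    rw [hcount] at h
    have heq : ∑ i ∈ Finset.range n, (((N + 1 + i : ℕ) : ℝ) ^ 2)⁻¹
        = ∑ i ∈ Finset.range n, (((i : ℝ) + N + 1) ^ 2)⁻¹ := by
      refine Finset.sum_congr rfl fun i _ => ?_
      push_cast
      ring_nf
    rw [heq] at h
    have : (0:ℝ) ≤ ((N + n : ℕ) : ℝ)⁻¹ := by positivity
    linarith
  have htail : ∑' i : ℕ, M (i + N) ≤ 1 := by
    have hle : ∀ i : ℕ, M (i + N) ≤ (1 / p) * (((i : ℝ) + N + 1) ^ 2)⁻¹ := by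
      intro i
      refine (hMle (i + N)).trans (le_of_eq ?_)
      push_cast
      rw [one_div, mul_inv]
      ring_nf
    have hsum2 : Summable (fun i : ℕ => (1 / p) * (((i : ℝ) + N + 1) ^ 2)⁻¹) :=
      hbase.mul_left _
    calc ∑' i : ℕ, M (i + N)
        ≤ ∑' i : ℕ, (1 / p) * (((i : ℝ) + N + 1) ^ 2)⁻¹ :=
          Summable.tsum_le_tsum hle ((summable_nat_add_iff N).mpr hMs) hsum2
      _ = (1 / p) * ∑' i : ℕ, (((i : ℝ) + N + 1) ^ 2)⁻¹ := tsum_mul_left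
      _ ≤ (1 / p) * (N : ℝ)⁻¹ := by
          exact mul_le_mul_of_nonneg_left htail0 (by positivity)
      _ ≤ 1 := by
          calc (1 / p) * (N : ℝ)⁻¹ ≤ (N : ℝ) * (N : ℝ)⁻¹ :=
                mul_le_mul_of_nonneg_right hNp (by positivity)
            _ = 1 := mul_inv_cancel₀ hNR0.ne'
  -- put together
  have hlogN : Real.log N ≤ Real.log 2 + Real.log (1 / p) := by
    calc Real.log N ≤ Real.log (2 * (1 / p)) := Real.log_le_log hNR0 hNle
      _ = Real.log 2 + Real.log (1 / p) := Real.log_mul (by norm_num) (by positivity)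
  have hlog2 : Real.log 2 ≤ 1 := by
    have := Real.log_le_sub_one_of_pos (by norm_num : (0:ℝ) < 2)
    linarith
  have hlogp : 0 ≤ Real.log (1 / p) := Real.log_nonneg hinvp1
  calc ∑' k : ℕ, M k = ∑ i ∈ Finset.range N, M i + ∑' i : ℕ, M (i + N) := hsplit
    _ ≤ (1 + Real.log N) + 1 := add_le_add hhead htail
    _ ≤ 3 * (1 + Real.log (1 / p)) := by linarith

end QPochAux

/-- The infinite q-Pochhammer product `(q;q)_∞ = ∏_{j=1}^∞ (1 − q^j)`. -/
def qPochInf (q : ℝ) : ℝ := ∏' j : ℕ, (1 - q ^ (j + 1))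

/-- Asymptotics of the q-Pochhammer product: there are `C > 0` and `p₀ ∈ (0,1)` such
that for all `0 < p ≤ p₀`, with `q = 1 − p`,
`|−log (q;q)_∞ − π²/(6p)| ≤ C(1 + log(1/p))`. -/
theorem stmt_6 :
    ∃ C : ℝ, 0 < C ∧ ∃ p₀ : ℝ, 0 < p₀ ∧ p₀ < 1 ∧
      ∀ p : ℝ, 0 < p → p ≤ p₀ →
        |(-Real.log (qPochInf (1 - p))) - Real.pi ^ 2 / (6 * p)| ≤
          C * (1 + Real.log (1 / p)) := by
  refine ⟨3, by norm_num, 1/2, by norm_num, by norm_num, fun p hp0 hp2 => ?_⟩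
  have hp1 : p < 1 := by linarith
  set q : ℝ := 1 - p with hqdef
  have hq0 : 0 < q := by rw [hqdef]; linarith
  have hq1 : q < 1 := by rw [hqdef]; linarith
  have hqpow1 : ∀ n : ℕ, q ^ (n + 1) < 1 :=
    fun n => pow_lt_one₀ hq0.le hq1 (Nat.succ_ne_zero n)
  have hqpow0 : ∀ n : ℕ, 0 ≤ q ^ (n + 1) := fun n => pow_nonneg hq0.le _
  have hDpos : ∀ n : ℕ, 0 < 1 - q ^ (n + 1) := fun n => by linarith [hqpow1 n]
  -- the double series
  set f : ℕ → ℕ → ℝ := fun j k => (q ^ (j + 1)) ^ (k + 1) / ((k : ℝ) + 1) with hfdef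
  set g : ℕ → ℝ := fun j => -Real.log (1 - q ^ (j + 1)) with hgdef
  have hfk : ∀ j : ℕ, HasSum (f j) (g j) := by
    intro j
    have hx : |q ^ (j + 1)| < 1 := by
      rw [abs_of_nonneg (hqpow0 j)]; exact hqpow1 j
    exact hasSum_pow_div_log_of_abs_lt_one hx
  have hfnn : ∀ j k, 0 ≤ f j k := fun j k => by
    have := hqpow0 j
    positivity
  have hfle : ∀ j k, f j k ≤ q ^ (j + 1) * q ^ k := by
    intro j k
    have h1 : f j k ≤ (q ^ (j + 1)) ^ (k + 1) := by
      apply div_le_self (by positivity)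
      have : (0:ℝ) ≤ (k : ℝ) := Nat.cast_nonneg k
      linarith
    have h2 : (q ^ (j + 1)) ^ (k + 1) ≤ q ^ (j + 1 + k) := by
      rw [← pow_mul]
      apply pow_le_pow_of_le_one hq0.le hq1.le
      calc j + 1 + k ≤ j + 1 + (j + 1) * k := by
            have : k ≤ (j + 1) * k := Nat.le_mul_of_pos_left k (Nat.succ_pos j)
            omega
        _ = (j + 1) * (k + 1) := by ring
    calc f j k ≤ q ^ (j + 1 + k) := h1.trans h2
      _ = q ^ (j + 1) * q ^ k := pow_add q (j + 1) k
  have hgeo_sum : Summable (fun j : ℕ => q ^ (j + 1) * (1 - q)⁻¹) := by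
    have := (summable_geometric_of_lt_one hq0.le hq1).mul_left (q * (1 - q)⁻¹)
    refine this.congr fun j => ?_
    rw [pow_succ]
    ring
  have hgnn : ∀ j, 0 ≤ g j := by
    intro j
    rw [hgdef]
    simp only [neg_nonneg]
    apply Real.log_nonpos
    · linarith [hDpos j]
    · linarith [hqpow0 j]
  have hgle : ∀ j, g j ≤ q ^ (j + 1) * (1 - q)⁻¹ := by
    intro j
    have hsg : Summable (fun k : ℕ => q ^ (j + 1) * q ^ k) :=
      (summable_geometric_of_lt_one hq0.le hq1).mul_left _
    calc g j = ∑' k, f j k := ((hfk j).tsum_eq).symm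
      _ ≤ ∑' k, q ^ (j + 1) * q ^ k := Summable.tsum_le_tsum (hfle j) (hfk j).summable hsg
      _ = q ^ (j + 1) * ∑' k, q ^ k := tsum_mul_left
      _ = q ^ (j + 1) * (1 - q)⁻¹ := by rw [tsum_geometric_of_lt_one hq0.le hq1]
  have hgsummable : Summable g := Summable.of_nonneg_of_le hgnn hgle hgeo_sum
  set S : ℝ := ∑' j, g j with hSdef
  have hS : HasSum g S := hgsummable.hasSum
  -- the product
  have hprod : HasProd (fun j : ℕ => 1 - q ^ (j + 1)) (Real.exp (-S)) := by
    have h2 := hS.neg.rexp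
    have hfeq : (Real.exp ∘ fun j : ℕ => -g j) = fun j : ℕ => 1 - q ^ (j + 1) := by
      funext j
      simp only [Function.comp_apply, hgdef, neg_neg]
      exact Real.exp_log (hDpos j)
    rwa [hfeq] at h2
  have hpoch : qPochInf q = Real.exp (-S) := hprod.tprod_eq
  have hlogS : -Real.log (qPochInf q) = S := by
    rw [hpoch, Real.log_exp, neg_neg]
  -- Fubini
  have hF : Summable (Function.uncurry f) := by
    exact (summable_prod_of_nonneg (fun x => hfnn x.1 x.2)).mpr
      ⟨fun j => (hfk j).summable, hgsummable.congr fun j => ((hfk j).tsum_eq).symm⟩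
  set a : ℕ → ℝ := fun k => q ^ (k + 1) / (((k : ℝ) + 1) * (1 - q ^ (k + 1))) with hadef
  have ha_k : ∀ k : ℕ, HasSum (fun j => f j k) (a k) := by
    intro k
    have hgeo : HasSum (fun j : ℕ => (q ^ (k + 1)) ^ j) ((1 - q ^ (k + 1))⁻¹) :=
      hasSum_geometric_of_lt_one (hqpow0 k) (hqpow1 k)
    have h := hgeo.mul_left (q ^ (k + 1) / ((k : ℝ) + 1))
    have heq : (fun j : ℕ => q ^ (k + 1) / ((k : ℝ) + 1) * (q ^ (k + 1)) ^ j)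
        = fun j : ℕ => f j k := by
      funext j
      rw [hfdef]
      simp only
      rw [div_mul_eq_mul_div, ← pow_succ', ← pow_mul, mul_comm (k + 1) (j + 1), pow_mul]
    rw [heq] at h
    have hval : q ^ (k + 1) / ((k : ℝ) + 1) * (1 - q ^ (k + 1))⁻¹ = a k := by
      have hk0 : ((k : ℝ) + 1) ≠ 0 := by positivity
      have hD : (1 - q ^ (k + 1)) ≠ 0 := (hDpos k).ne'
      rw [hadef]
      simp only
      field_simp
      try ring
    rwa [hval] at h
  have hsa : Summable a := by
    have h1 := hF.prod_symm.prod
    refine h1.congr fun k => ?_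
    exact (ha_k k).tsum_eq
  have hSa : ∑' k, a k = S := by
    calc ∑' k, a k = ∑' k, ∑' j, f j k := tsum_congr fun k => ((ha_k k).tsum_eq).symm
      _ = ∑' j, ∑' k, f j k := Summable.tsum_comm hF
      _ = ∑' j, g j := tsum_congr fun j => (hfk j).tsum_eq
  have haS : HasSum a S := hsa.hasSum_iff.mpr hSa
  -- the comparison series
  set b : ℕ → ℝ := fun k => 1 / (((k : ℝ) + 1) ^ 2 * p) with hbdef
  have hb : HasSum b (Real.pi ^ 2 / (6 * p)) := by
    have h := QPochAux.hasSum_basel_succ.div_const p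
    have heq : (fun n : ℕ => 1 / ((n : ℝ) + 1) ^ 2 / p) = b := by
      funext n; rw [hbdef]; simp only; rw [div_div]
    rw [heq] at h
    rwa [div_div] at h
  have hdiff : HasSum (fun k => a k - b k) (S - Real.pi ^ 2 / (6 * p)) := haS.sub hb
  -- termwise bound
  set M : ℕ → ℝ := fun k => min (1 / ((k : ℝ) + 1)) (1 / (((k : ℝ) + 1) ^ 2 * p)) with hMdef
  have htb : ∀ k, |a k - b k| ≤ M k := fun k => QPochAux.term_bound hp0 hp1 k
  have hMnn : ∀ k, 0 ≤ M k := fun k => le_min (by positivity) (by positivity)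
  have hMle : ∀ k, M k ≤ b k := fun k => min_le_right _ _
  have hMs : Summable M := Summable.of_nonneg_of_le hMnn hMle hb.summable
  have habs : Summable (fun k => |a k - b k|) :=
    Summable.of_nonneg_of_le (fun k => abs_nonneg _) (fun k => (htb k).trans (hMle k)) hb.summable
  rw [hlogS]
  calc |S - Real.pi ^ 2 / (6 * p)|
      = ‖∑' k, (a k - b k)‖ := by rw [hdiff.tsum_eq, Real.norm_eq_abs]
    _ ≤ ∑' k, ‖a k - b k‖ := norm_tsum_le_tsum_norm (by simpa [Real.norm_eq_abs] using habs)
    _ = ∑' k, |a k - b k| := by simp [Real.norm_eq_abs]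
    _ ≤ ∑' k, M k := Summable.tsum_le_tsum htb habs hMs
    _ ≤ 3 * (1 + Real.log (1 / p)) := QPochAux.sum_min_le hp0 hp2

end
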